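/- Consider the Crank–Nicolson scheme i(u^{n+1}_j - u^n_j)/Δt + (1/2)(Lu^{n+1})_j + (1/2)(Lu^n)_j = -F_j(u^{n+1},u^n) on ℂ^N with L real symmetric and F_j(u^{n+1},u^n) = (1/(p+1)) · ((|u^{n+1}_j|^{p+1} - |u^n_j|^{p+1})/(|u^{n+1}_j|² - |u^n_j|²)) · (u^{n+1}_j + u^n_j) when |u^{n+1}_j| ≠ |u^n_j|. Then the discrete energy E[u^n] = (1/2)⟨Lu^n, u^n⟩_ℝ - (1/(p+1)) Σ_j |u^n_j|^{p+1} satisfies E[u^{n+1}] = E[u^n], where ⟨·,·⟩_ℝ denotes the real part of the Hermitian inner product and L is taken with sign so that ⟨Lu,u⟩ corresponds to the discrete Dirichlet form. -/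

import Mathlib

open Complex

/-- Discrete energy: `E[x] = (1/2)⟨Ax, x⟩_ℝ - (1/(p+1)) Σ_j |x_j|^{p+1}`, where
`A = -L` carries the sign of the discrete Dirichlet form. -/
noncomputable def discreteEnergy {N : ℕ} (p : ℝ) (L : Matrix (Fin N) (Fin N) ℝ)
    (x : Fin N → ℂ) : ℝ :=
  (1 / 2) * (∑ j : Fin N, ((-L).map Complex.ofReal).mulVec x j * (starRingEnd ℂ) (x j)).re
    - 1 / (p + 1) * ∑ j : Fin N, ‖x j‖ ^ (p + 1)

/-- The real part of the Dirichlet-type sesquilinear sum is symmetric when `L` is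
a real symmetric matrix. -/
theorem cn_sym_aux {N : ℕ} (L : Matrix (Fin N) (Fin N) ℝ) (hL : L.IsSymm) (x y : Fin N → ℂ) :
    (∑ j : Fin N, ((L.map Complex.ofReal).mulVec x j * (starRingEnd ℂ) (y j)).re)
    = ∑ j : Fin N, ((L.map Complex.ofReal).mulVec y j * (starRingEnd ℂ) (x j)).re := by
  simp only [Matrix.mulVec, dotProduct, Finset.sum_mul, Complex.re_sum]
  rw [Finset.sum_comm]
  refine Finset.sum_congr rfl fun j _ => Finset.sum_congr rfl fun k _ => ?_
  have hsymm : L j k = L k j := hL.apply k j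
  simp only [Matrix.map_apply, Complex.mul_re, Complex.mul_im, Complex.ofReal_re,
    Complex.ofReal_im, Complex.conj_re, Complex.conj_im]
  rw [hsymm]; ring

/-- Rewriting the discrete energy with `L` instead of `-L`. -/
theorem cn_energy_aux {N : ℕ} (p : ℝ) (L : Matrix (Fin N) (Fin N) ℝ) (x : Fin N → ℂ) :
    discreteEnergy p L x = -(1/2) * (∑ j : Fin N,
      ((L.map Complex.ofReal).mulVec x j * (starRingEnd ℂ) (x j)).re)
      - 1 / (p + 1) * ∑ j : Fin N, ‖x j‖ ^ (p + 1) := by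
  unfold discreteEnergy
  have hneg : (-L).map Complex.ofReal = -(L.map Complex.ofReal) := by
    ext i j; simp
  rw [hneg, Matrix.neg_mulVec]
  simp [Complex.re_sum, Finset.mul_sum]

/-- the Crank–Nicolson scheme with the Delfour–Fortin–Payre
discretized nonlinearity conserves the discrete energy. -/
theorem crank_nicolson_energy_conservation {N : ℕ} (Δt : ℝ) (hΔt : 0 < Δt) (p : ℝ)
    (hp : 1 < p) (L : Matrix (Fin N) (Fin N) ℝ) (hL : L.IsSymm)
    (u w : Fin N → ℂ) (habs : ∀ j, ‖w j‖ ≠ ‖u j‖)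
    (hscheme : ∀ j : Fin N,
      Complex.I * (w j - u j) / (Δt : ℂ)
        + (1 / 2) * (L.map Complex.ofReal).mulVec w j
        + (1 / 2) * (L.map Complex.ofReal).mulVec u j
      = -(((1 / (p + 1)) *
            ((‖w j‖ ^ (p + 1) - ‖u j‖ ^ (p + 1)) /
              (‖w j‖ ^ 2 - ‖u j‖ ^ 2)) : ℝ) : ℂ) *
          (w j + u j)) :
    discreteEnergy p L w = discreteEnergy p L u := by
  have hΔc : (Δt : ℂ) ≠ 0 := by exact_mod_cast hΔt.ne'
  set B := L.map (Complex.ofReal) with hB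
  -- Per-index energy identity obtained by multiplying the scheme by
  -- `conj (w j - u j)` and taking real parts.
  have key : ∀ j : Fin N,
      (B.mulVec w j * (starRingEnd ℂ) (w j - u j)).re
        + (B.mulVec u j * (starRingEnd ℂ) (w j - u j)).re
      = -(2 / (p + 1)) * (‖w j‖ ^ (p + 1) - ‖u j‖ ^ (p + 1)) := by
    intro j
    have h := hscheme j
    set c : ℝ := (1 / (p + 1)) *
      ((‖w j‖ ^ (p + 1) - ‖u j‖ ^ (p + 1)) /
        (‖w j‖ ^ 2 - ‖u j‖ ^ 2)) with hcdef
    have hne : ‖w j‖ ^ 2 - ‖u j‖ ^ 2 ≠ 0 := by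
      intro hh
      apply habs j
      have h1 : ‖w j‖ ^ 2 = ‖u j‖ ^ 2 := by linarith
      calc ‖w j‖ = Real.sqrt (‖w j‖ ^ 2) :=
            (Real.sqrt_sq (norm_nonneg _)).symm
        _ = Real.sqrt (‖u j‖ ^ 2) := by rw [h1]
        _ = ‖u j‖ := Real.sqrt_sq (norm_nonneg _)
    have hc : c * (‖w j‖ ^ 2 - ‖u j‖ ^ 2)
        = 1 / (p + 1) * (‖w j‖ ^ (p + 1) - ‖u j‖ ^ (p + 1)) := by
      rw [hcdef, mul_assoc, div_mul_cancel₀ _ hne]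
    have h2 : B.mulVec w j * (starRingEnd ℂ) (w j - u j)
        + B.mulVec u j * (starRingEnd ℂ) (w j - u j)
        = -((c : ℝ) : ℂ) * (w j + u j) * (starRingEnd ℂ) (w j - u j) * 2
          - 2 * ((Complex.normSq (w j - u j) : ℝ) : ℂ) / (Δt : ℂ) * I := by
      linear_combination (2 * (starRingEnd ℂ) (w j - u j)) * h
        - (2 * I / (Δt : ℂ)) * Complex.mul_conj (w j - u j)
    have hz : (2 * ((Complex.normSq (w j - u j) : ℝ) : ℂ) / (Δt : ℂ) * I).re = 0 := by
      have : 2 * ((Complex.normSq (w j - u j) : ℝ) : ℂ) / (Δt : ℂ)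
          = ((2 * Complex.normSq (w j - u j) / Δt : ℝ) : ℂ) := by push_cast; ring
      rw [this]
      simp
    have h3 := congrArg Complex.re h2
    rw [Complex.sub_re, hz, sub_zero, Complex.add_re] at h3
    have hgoal : -(2 / (p + 1)) * (‖w j‖ ^ (p + 1) - ‖u j‖ ^ (p + 1))
        = -2 * (c * (‖w j‖ ^ 2 - ‖u j‖ ^ 2)) := by
      rw [hc]; ring
    rw [hgoal, Complex.sq_norm, Complex.sq_norm]
    rw [h3]
    simp only [Complex.mul_re, Complex.mul_im, Complex.neg_re, Complex.neg_im,
      Complex.ofReal_re, Complex.ofReal_im, Complex.add_re, Complex.add_im,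
      Complex.sub_re, Complex.sub_im, Complex.conj_re, Complex.conj_im,
      Complex.normSq_apply, Complex.re_ofNat, Complex.im_ofNat]
    ring
  -- Sum the per-index identities.
  have hsum : (∑ j : Fin N, ((B.mulVec w j * (starRingEnd ℂ) (w j - u j)).re
        + (B.mulVec u j * (starRingEnd ℂ) (w j - u j)).re))
      = ∑ j : Fin N, -(2 / (p + 1)) *
          (‖w j‖ ^ (p + 1) - ‖u j‖ ^ (p + 1)) :=
    Finset.sum_congr rfl fun j _ => key j
  have hsplit : ∀ x : Fin N → ℂ,
      (∑ j : Fin N, (B.mulVec x j * (starRingEnd ℂ) (w j - u j)).re)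
      = (∑ j : Fin N, (B.mulVec x j * (starRingEnd ℂ) (w j)).re)
        - ∑ j : Fin N, (B.mulVec x j * (starRingEnd ℂ) (u j)).re := by
    intro x
    rw [← Finset.sum_sub_distrib]
    refine Finset.sum_congr rfl fun j _ => ?_
    rw [map_sub, mul_sub, Complex.sub_re]
  rw [Finset.sum_add_distrib, hsplit w, hsplit u] at hsum
  simp only [mul_sub, Finset.sum_sub_distrib, ← Finset.mul_sum] at hsum
  have hsym := cn_sym_aux L hL w u
  rw [cn_energy_aux, cn_energy_aux, ← hB]
  rw [← hB] at hsym
  linear_combination (-(1/2 : ℝ)) * hsum - (1/2 : ℝ) * hsym
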